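/- Let k ≥ 1, let φ ∈ ℝ^k satisfy φ_j > 0 for all j, let Σ be a diagonal k×k matrix with diagonal entries Σ_jj > 0, and let p ≥ 1. For w in the feasible set D = {w ∈ ℝ^k : w_j ≥ 0 for all j, ‖w‖_p = 1}, set σ(w)² = 2·Σ_j Σ_jj w_j² and define the user utility U(w) = F_{σ(w)}(Σ_j w_j φ_j), where F_σ(x) = ∫_{−∞}^x g_σ(t) dt. Then U attains its maximum over D uniquely at w* = Σ⁻¹φ / ‖Σ⁻¹φ‖_p. (Because the symmetric equilibrium efforts of the two producers cancel, this same w* remains the user-optimal weight vector under strategic adaptation, independent of the cost matrix A.) -/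

import Mathlib

/-- The density of the centered Gaussian `N(0, σ²)`. -/
noncomputable def gauss (σ x : ℝ) : ℝ :=
  (Real.sqrt (2 * Real.pi * σ ^ 2))⁻¹ * Real.exp (-x ^ 2 / (2 * σ ^ 2))

/-- The CDF of the centered Gaussian `N(0, σ²)`. -/
noncomputable def gaussCDF (σ x : ℝ) : ℝ := ∫ t in Set.Iic x, gauss σ t


lemma gauss_pos (σ : ℝ) (hσ : 0 < σ) (x : ℝ) : 0 < gauss σ x := by
  unfold gauss
  have : 0 < Real.sqrt (2 * Real.pi * σ ^ 2) := Real.sqrt_pos.2 (by positivity)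
  positivity

lemma gauss_integrable : MeasureTheory.Integrable (gauss 1) := by
  unfold gauss
  have h : MeasureTheory.Integrable (fun x : ℝ => Real.exp (-(1/2) * x ^ 2)) :=
    integrable_exp_neg_mul_sq (by norm_num)
  have := h.const_mul (Real.sqrt (2 * Real.pi * 1 ^ 2))⁻¹
  convert this using 2 with x
  ring_nf

lemma gaussCDF_one_strictMono : StrictMono (gaussCDF 1) := by
  intro a b hab
  have hint : MeasureTheory.IntegrableOn (gauss 1) (Set.Iic a) := gauss_integrable.integrableOn
  have hintb : MeasureTheory.IntegrableOn (gauss 1) (Set.Iic b) := gauss_integrable.integrableOn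
  have key : gaussCDF 1 b - gaussCDF 1 a = ∫ t in a..b, gauss 1 t :=
    intervalIntegral.integral_Iic_sub_Iic hint hintb
  have hpos : 0 < ∫ t in a..b, gauss 1 t :=
    intervalIntegral.intervalIntegral_pos_of_pos (gauss_integrable.intervalIntegrable) (gauss_pos 1 one_pos) hab
  linarith

lemma gaussCDF_scale (σ : ℝ) (hσ : 0 < σ) (x : ℝ) : gaussCDF σ x = gaussCDF 1 (x / σ) := by
  have himg : (fun u : ℝ => σ * u) '' Set.Iic (x / σ) = Set.Iic x := by
    ext t
    simp only [Set.mem_image, Set.mem_Iic]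
    constructor
    · rintro ⟨v, hv, rfl⟩
      calc σ * v ≤ σ * (x / σ) := by nlinarith
        _ = x := by field_simp
    · intro ht
      exact ⟨t / σ, by gcongr, by field_simp⟩
  have hderiv : ∀ u ∈ Set.Iic (x / σ),
      HasDerivWithinAt (fun u : ℝ => σ * u) σ (Set.Iic (x / σ)) u := by
    intro u _
    simpa using ((hasDerivAt_id u).const_mul σ).hasDerivWithinAt
  have hinj : Set.InjOn (fun u : ℝ => σ * u) (Set.Iic (x / σ)) :=
    fun u _ v _ h => mul_left_cancel₀ hσ.ne' h
  have key := MeasureTheory.integral_image_eq_integral_abs_deriv_smul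
    measurableSet_Iic hderiv hinj (gauss σ)
  rw [himg] at key
  unfold gaussCDF
  rw [key]
  apply MeasureTheory.setIntegral_congr_fun measurableSet_Iic
  intro u _
  simp only [smul_eq_mul]
  unfold gauss
  have h1 : Real.sqrt (2 * Real.pi * σ ^ 2) = Real.sqrt (2 * Real.pi * 1 ^ 2) * σ := by
    rw [show 2 * Real.pi * σ ^ 2 = (2 * Real.pi * 1 ^ 2) * σ ^ 2 by ring,
      Real.sqrt_mul (by positivity), Real.sqrt_sq hσ.le]
  have h2 : -(σ * u) ^ 2 / (2 * σ ^ 2) = -u ^ 2 / (2 * 1 ^ 2) := by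
    field_simp
  have h3 : 0 < Real.sqrt (2 * Real.pi * 1 ^ 2) := Real.sqrt_pos.2 (by positivity)
  rw [abs_of_pos hσ, h1, h2, mul_inv]
  field_simp

/-- User utility `U(w) = F_{σ(w)}(wᵀφ)`, with `σ(w)² = 2wᵀSw`, attains its
maximum over `D = {w : w ≥ 0, ‖w‖ₚ = 1}` uniquely at `w* = S⁻¹φ/‖S⁻¹φ‖ₚ` (the same
user-optimal weight vector as without strategic adaptation). -/
theorem stmt_18 (k : ℕ) (hk : 1 ≤ k) (p : ℝ) (hp : 1 ≤ p)
    (φ S : Fin k → ℝ) (hφ : ∀ j, 0 < φ j) (hS : ∀ j, 0 < S j) :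
    let pnorm : (Fin k → ℝ) → ℝ := fun w => (∑ j, |w j| ^ p) ^ (1 / p)
    let D : Set (Fin k → ℝ) := {w | (∀ j, 0 ≤ w j) ∧ pnorm w = 1}
    let U : (Fin k → ℝ) → ℝ :=
      fun w => gaussCDF (Real.sqrt (2 * ∑ j, S j * w j ^ 2)) (∑ j, w j * φ j)
    let wstar : Fin k → ℝ := fun j => (φ j / S j) / pnorm (fun i => φ i / S i)
    wstar ∈ D ∧ (∀ w ∈ D, U w ≤ U wstar) ∧ (∀ w ∈ D, U w = U wstar → w = wstar) := by
  intro pnorm D U wstar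
  haveI : Nonempty (Fin k) := ⟨⟨0, hk⟩⟩
  have hppos : 0 < p := lt_of_lt_of_le one_pos hp
  have hp0 : p ≠ 0 := hppos.ne'
  set c : Fin k → ℝ := fun j => φ j / S j with hc
  have hcpos : ∀ j, 0 < c j := fun j => div_pos (hφ j) (hS j)
  -- homogeneity of pnorm
  have hhom : ∀ (t : ℝ), 0 ≤ t → ∀ v : Fin k → ℝ,
      pnorm (fun j => t * v j) = t * pnorm v := by
    intro t ht v
    show (∑ j, |t * v j| ^ p) ^ (1/p) = t * (∑ j, |v j| ^ p) ^ (1/p)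
    have h1 : ∀ j, |t * v j| ^ p = t ^ p * |v j| ^ p := fun j => by
      rw [abs_mul, abs_of_nonneg ht, Real.mul_rpow ht (abs_nonneg _)]
    have hsn : 0 ≤ ∑ j, |v j| ^ p :=
      Finset.sum_nonneg fun j _ => Real.rpow_nonneg (abs_nonneg _) p
    have h2 : (t ^ p) ^ (1/p) = t := by
      rw [← Real.rpow_mul ht, mul_one_div_cancel hp0, Real.rpow_one]
    rw [Finset.sum_congr rfl fun j _ => h1 j, ← Finset.mul_sum,
      Real.mul_rpow (Real.rpow_nonneg ht p) hsn, h2]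
  -- positivity of pnorm c
  have hsumc : 0 < ∑ j, |c j| ^ p :=
    Finset.sum_pos (fun j _ => Real.rpow_pos_of_pos (abs_pos.2 (hcpos j).ne') p)
      Finset.univ_nonempty
  have hNp : 0 < pnorm c := Real.rpow_pos_of_pos hsumc _
  set Np : ℝ := pnorm c with hNpdef
  have hwstar : ∀ j, wstar j = c j / Np := fun j => rfl
  -- M
  set M : ℝ := ∑ j, φ j ^ 2 / S j with hM
  have hMpos : 0 < M :=
    Finset.sum_pos (fun j _ => div_pos (pow_pos (hφ j) 2) (hS j)) Finset.univ_nonempty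
  have hcφ : ∀ j, c j * φ j = φ j ^ 2 / S j := fun j => by
    rw [hc]; have := (hS j).ne'; field_simp
  have hScc : ∀ j, S j * c j ^ 2 = φ j ^ 2 / S j := fun j => by
    rw [hc]; have := (hS j).ne'; field_simp
  -- wstar ∈ D
  have hwD : wstar ∈ D := by
    constructor
    · intro j; exact div_nonneg (hcpos j).le hNp.le
    · have : wstar = fun j => Np⁻¹ * c j := funext fun j => by rw [hwstar j, div_eq_inv_mul]
      rw [this, hhom _ (inv_nonneg.2 hNp.le) c, inv_mul_cancel₀ hNp.ne']
  -- expansion identity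
  have expand : ∀ (w : Fin k → ℝ) (t : ℝ), ∑ j, S j * (w j - t * c j) ^ 2
      = (∑ j, S j * w j ^ 2) - 2 * t * (∑ j, w j * φ j) + t ^ 2 * M := by
    intro w t
    have h1 : ∀ j, S j * (w j - t * c j) ^ 2
        = S j * w j ^ 2 - 2 * t * (w j * φ j) + t ^ 2 * (φ j ^ 2 / S j) := fun j => by
      rw [hc]; have := (hS j).ne'; field_simp; ring
    rw [Finset.sum_congr rfl fun j _ => h1 j, Finset.sum_add_distrib,
      Finset.sum_sub_distrib, ← Finset.mul_sum, ← Finset.mul_sum]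
  -- A wstar, B wstar
  have hAstar : (∑ j, wstar j * φ j) = M / Np := by
    rw [hM, Finset.sum_div]
    exact Finset.sum_congr rfl fun j _ => by rw [hwstar j, div_mul_eq_mul_div, hcφ j]
  have hBstar : (∑ j, S j * wstar j ^ 2) = M / Np ^ 2 := by
    rw [hM, Finset.sum_div]
    refine Finset.sum_congr rfl fun j _ => ?_
    rw [hwstar j, div_pow, mul_div_assoc', hScc j]
  -- facts for w ∈ D
  have hApos : ∀ w ∈ D, 0 < ∑ j, w j * φ j := by
    intro w hw
    obtain ⟨hw0, hw1⟩ := hw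
    have : ∃ j, 0 < w j := by
      by_contra h
      push_neg at h
      have hz : ∀ j, w j = 0 := fun j => le_antisymm (h j) (hw0 j)
      have : pnorm w = 0 := by
        show (∑ j, |w j| ^ p) ^ (1/p) = 0
        rw [Finset.sum_eq_zero fun j _ => by
          rw [hz j, abs_zero, Real.zero_rpow hp0]]
        exact Real.zero_rpow (one_div_ne_zero hp0)
      rw [hw1] at this; norm_num at this
    obtain ⟨j, hj⟩ := this
    exact Finset.sum_pos' (fun i _ => mul_nonneg (hw0 i) (hφ i).le)
      ⟨j, Finset.mem_univ j, mul_pos hj (hφ j)⟩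
  have hBpos : ∀ w ∈ D, 0 < ∑ j, S j * w j ^ 2 := by
    intro w hw
    obtain ⟨hw0, hw1⟩ := hw
    have : ∃ j, 0 < w j := by
      by_contra h
      push_neg at h
      have hz : ∀ j, w j = 0 := fun j => le_antisymm (h j) (hw0 j)
      have : pnorm w = 0 := by
        show (∑ j, |w j| ^ p) ^ (1/p) = 0
        rw [Finset.sum_eq_zero fun j _ => by
          rw [hz j, abs_zero, Real.zero_rpow hp0]]
        exact Real.zero_rpow (one_div_ne_zero hp0)
      rw [hw1] at this; norm_num at this
    obtain ⟨j, hj⟩ := this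
    exact Finset.sum_pos' (fun i _ => mul_nonneg (hS i).le (sq_nonneg _))
      ⟨j, Finset.mem_univ j, mul_pos (hS j) (pow_pos hj 2)⟩
  -- Cauchy-Schwarz
  have hCS : ∀ w : Fin k → ℝ, (∑ j, w j * φ j) ^ 2 ≤ (∑ j, S j * w j ^ 2) * M := by
    intro w
    set A := ∑ j, w j * φ j
    set B := ∑ j, S j * w j ^ 2
    have h0 : 0 ≤ ∑ j, S j * (w j - (A / M) * c j) ^ 2 :=
      Finset.sum_nonneg fun j _ => mul_nonneg (hS j).le (sq_nonneg _)
    rw [expand w (A / M)] at h0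
    have : B - 2 * (A / M) * A + (A / M) ^ 2 * M = B - A ^ 2 / M := by
      field_simp; ring
    rw [this] at h0
    have := (div_le_iff₀ hMpos).mp (by linarith : A ^ 2 / M ≤ B)
    linarith [this]
  -- U w = gaussCDF 1 (arg w)
  have hU : ∀ w ∈ D, U w
      = gaussCDF 1 ((∑ j, w j * φ j) / Real.sqrt (2 * ∑ j, S j * w j ^ 2)) := by
    intro w hw
    exact gaussCDF_scale _ (Real.sqrt_pos.2 (by linarith [hBpos w hw])) _
  -- the target value
  have hτstar : (∑ j, wstar j * φ j) / Real.sqrt (2 * ∑ j, S j * wstar j ^ 2)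
      = Real.sqrt M / Real.sqrt 2 := by
    rw [hAstar, hBstar]
    have h1 : 2 * (M / Np ^ 2) = (2 * M) / Np ^ 2 := by ring
    rw [h1, Real.sqrt_div' _ (by positivity), Real.sqrt_sq hNp.le,
      Real.sqrt_mul (by norm_num) M]
    have h2 : Real.sqrt M ≠ 0 := (Real.sqrt_pos.2 hMpos).ne'
    have h3 : Real.sqrt 2 ≠ 0 := by positivity
    field_simp
    linear_combination (-1 : ℝ) * Real.mul_self_sqrt hMpos.le
  -- main inequality on arguments
  have harg : ∀ w ∈ D, (∑ j, w j * φ j) / Real.sqrt (2 * ∑ j, S j * w j ^ 2)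
      ≤ Real.sqrt M / Real.sqrt 2 := by
    intro w hw
    set A := ∑ j, w j * φ j with hA
    set B := ∑ j, S j * w j ^ 2 with hB
    have hA0 := hApos w hw
    have hB0 := hBpos w hw
    have hle : A ≤ Real.sqrt B * Real.sqrt M := by
      rw [← Real.sqrt_mul hB0.le]
      exact (Real.le_sqrt hA0.le (by positivity)).mpr (hCS w)
    have hsq : Real.sqrt (2 * B) = Real.sqrt 2 * Real.sqrt B := Real.sqrt_mul (by norm_num) B
    rw [hsq]
    rw [div_le_div_iff₀ (by positivity) (by positivity)]
    calc A * Real.sqrt 2 ≤ (Real.sqrt B * Real.sqrt M) * Real.sqrt 2 := by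
          apply mul_le_mul_of_nonneg_right hle (Real.sqrt_nonneg 2)
      _ = Real.sqrt M * (Real.sqrt 2 * Real.sqrt B) := by ring
  refine ⟨hwD, ?_, ?_⟩
  · intro w hw
    rw [hU w hw, hU wstar hwD, hτstar]
    exact (gaussCDF_one_strictMono.le_iff_le).mpr (harg w hw)
  · intro w hw heq
    rw [hU w hw, hU wstar hwD, hτstar] at heq
    have hargeq := gaussCDF_one_strictMono.injective heq
    set A := ∑ j, w j * φ j with hA
    set B := ∑ j, S j * w j ^ 2 with hB
    have hA0 := hApos w hw
    have hB0 := hBpos w hw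
    -- A^2 = B * M
    have hABM : A ^ 2 = B * M := by
      have h2B : Real.sqrt (2 * B) = Real.sqrt 2 * Real.sqrt B := Real.sqrt_mul (by norm_num) B
      rw [h2B, div_eq_div_iff (by positivity) (by positivity)] at hargeq
      have : A * Real.sqrt 2 = Real.sqrt M * (Real.sqrt 2 * Real.sqrt B) := hargeq
      have h3 : A = Real.sqrt M * Real.sqrt B := by
        have hs2 : Real.sqrt 2 ≠ 0 := by positivity
        apply mul_right_cancel₀ hs2
        rw [this]; ring
      have := congrArg (· ^ 2) h3
      simp only [mul_pow, Real.sq_sqrt hMpos.le, Real.sq_sqrt hB0.le] at this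
      rw [this, Real.sq_sqrt (show (0:ℝ) ≤ B from hB0.le)]; ring
    set t : ℝ := A / M with ht
    have htpos : 0 < t := div_pos hA0 hMpos
    have hzero : ∑ j, S j * (w j - t * c j) ^ 2 = 0 := by
      rw [expand w t]
      have e1 : 2 * t * A = 2 * (A ^ 2 / M) := by rw [ht]; field_simp
      have e2 : t ^ 2 * M = A ^ 2 / M := by rw [ht, div_pow]; field_simp
      have e3 : A ^ 2 / M = B := by rw [hABM, mul_div_assoc, div_self hMpos.ne', mul_one]
      rw [e1, e2, e3]; ring
    have heach : ∀ j, w j = t * c j := by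
      intro j
      have := (Finset.sum_eq_zero_iff_of_nonneg
        (fun i _ => mul_nonneg (hS i).le (sq_nonneg _))).mp hzero j (Finset.mem_univ j)
      have h2 : (w j - t * c j) ^ 2 = 0 := by
        rcases mul_eq_zero.mp this with h | h
        · exact absurd h (hS j).ne'
        · exact h
      have := pow_eq_zero_iff (n := 2) (by norm_num) |>.mp h2
      linarith [this]
    have hwt : w = fun j => t * c j := funext heach
    have h1 : (1:ℝ) = t * Np := by
      rw [← hw.2, hwt, hhom t htpos.le c]
    have htNp : t = Np⁻¹ := eq_inv_of_mul_eq_one_left h1.symm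
    funext j
    rw [heach j, htNp, hwstar j, inv_mul_eq_div]
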